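/- For all integers m ≥ 0 and k ≥ 2, the spider Sp(2, 2+2m, 2+2m+k) with legs of lengths 2, 2+2m, 2+2m+k has local antimagic chromatic number 4. -/

import Mathlib

open SimpleGraph

/-- The induced vertex sum of an edge labeling. -/
noncomputable def vertexSum {V : Type*} (G : SimpleGraph V) (f : Sym2 V → ℕ) (x : V) : ℕ :=
  ∑ᶠ y ∈ G.neighborSet x, f s(x, y)

/-- `f` is a local antimagic labeling of `G`. -/
def IsLocalAntimagic {V : Type*} (G : SimpleGraph V) (f : Sym2 V → ℕ) : Prop :=
  Set.BijOn f G.edgeSet (Set.Icc 1 G.edgeSet.ncard) ∧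
  ∀ ⦃x y : V⦄, G.Adj x y → vertexSum G f x ≠ vertexSum G f y

/-- The number of distinct induced vertex labels of `f`. -/
noncomputable def colorCount {V : Type*} (G : SimpleGraph V) (f : Sym2 V → ℕ) : ℕ :=
  (Set.range (vertexSum G f)).ncard

/-- The local antimagic chromatic number. -/
noncomputable def chiLA {V : Type*} (G : SimpleGraph V) : ℕ :=
  sInf {n | ∃ f : Sym2 V → ℕ, IsLocalAntimagic G f ∧ colorCount G f = n}

/-- A pendant vertex: a vertex of degree 1. -/
def IsPendant {V : Type*} (G : SimpleGraph V) (x : V) : Prop :=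
  (G.neighborSet x).ncard = 1

/-- A pendant edge: an edge incident to a pendant vertex. -/
def IsPendantEdge {V : Type*} (G : SimpleGraph V) (e : Sym2 V) : Prop :=
  e ∈ G.edgeSet ∧ ∃ x ∈ e, IsPendant G x

/-- The spider graph with `d` legs of lengths `y i`: the core is `none`, and leg `i`
consists of vertices `some ⟨i, j⟩` for `j : Fin (y i)`, forming a path from the core. -/
def spider (d : ℕ) (y : Fin d → ℕ) : SimpleGraph (Option (Σ i : Fin d, Fin (y i))) :=
  SimpleGraph.fromRel (fun u v =>
    ∃ (i : Fin d) (j : Fin (y i)), (u = none ∧ v = some ⟨i, j⟩ ∧ (j : ℕ) = 0) ∨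
      (∃ k : Fin (y i), u = some ⟨i, j⟩ ∧ v = some ⟨i, k⟩ ∧ (j : ℕ) + 1 = (k : ℕ)))

namespace Stmt14


variable {d : ℕ} {y : Fin d → ℕ}

lemma sigma_eq_iff (s t : Σ i : Fin d, Fin (y i)) :
    s = t ↔ s.1 = t.1 ∧ (s.2 : ℕ) = (t.2 : ℕ) := by
  constructor
  · rintro rfl; exact ⟨rfl, rfl⟩
  · obtain ⟨i, j⟩ := s
    obtain ⟨i', j'⟩ := t
    rintro ⟨h1, h2⟩
    simp only at h1
    subst h1
    simp only at h2
    exact congrArg _ (Fin.ext h2)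

/-- the parent of a non-core vertex -/
def down (s : Σ i : Fin d, Fin (y i)) : Option (Σ i : Fin d, Fin (y i)) :=
  if _ : (s.2 : ℕ) = 0 then none
  else some ⟨s.1, ⟨(s.2 : ℕ) - 1, lt_of_le_of_lt (Nat.sub_le _ _) s.2.isLt⟩⟩

lemma down_eq_none_iff (s : Σ i : Fin d, Fin (y i)) :
    down s = none ↔ (s.2 : ℕ) = 0 := by
  rw [down]; split <;> simp_all

lemma down_eq_some_iff (t u : Σ i : Fin d, Fin (y i)) :
    down t = some u ↔ u.1 = t.1 ∧ (u.2 : ℕ) + 1 = (t.2 : ℕ) := by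
  rw [down]
  split
  next h => simp; omega
  next h =>
    rw [Option.some_inj, sigma_eq_iff]
    have := t.2.isLt
    constructor
    · rintro ⟨h1, h2⟩; exact ⟨h1.symm, by simp at h2; omega⟩
    · rintro ⟨h1, h2⟩; exact ⟨h1.symm, by simp; omega⟩

def rank : Option (Σ i : Fin d, Fin (y i)) → ℕ
  | none => 0
  | some s => (s.2 : ℕ) + 1

lemma rank_down (s : Σ i : Fin d, Fin (y i)) : rank (down s) = (s.2 : ℕ) := by
  unfold down
  split
  · simp [rank]; omega
  · simp [rank]; omega

lemma rank_down_lt (s : Σ i : Fin d, Fin (y i)) : rank (down s) < rank (some s) := by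
  rw [rank_down]; simp [rank]

lemma down_ne_some (s : Σ i : Fin d, Fin (y i)) : down s ≠ some s := by
  intro h
  have := rank_down_lt s
  rw [h] at this
  omega

/-- the relation used in `spider` holds iff `u` is the parent of `v`. -/
lemma spiderRel_iff (u v : Option (Σ i : Fin d, Fin (y i))) :
    (∃ (i : Fin d) (j : Fin (y i)), (u = none ∧ v = some ⟨i, j⟩ ∧ (j : ℕ) = 0) ∨
      (∃ k : Fin (y i), u = some ⟨i, j⟩ ∧ v = some ⟨i, k⟩ ∧ (j : ℕ) + 1 = (k : ℕ)))
    ↔ ∃ s, v = some s ∧ u = down s := by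
  constructor
  · rintro ⟨i, j, (⟨rfl, rfl, hj⟩ | ⟨kk, rfl, rfl, hjk⟩)⟩
    · exact ⟨⟨i, j⟩, rfl, by simp [down, hj]⟩
    · exact ⟨⟨i, kk⟩, rfl, ((down_eq_some_iff ⟨i, kk⟩ ⟨i, j⟩).2 ⟨rfl, hjk⟩).symm⟩
  · rintro ⟨⟨i, j⟩, rfl, rfl⟩
    by_cases hj : (j : ℕ) = 0
    · exact ⟨i, j, Or.inl ⟨by simp [down, hj], rfl, hj⟩⟩
    · refine ⟨i, ⟨(j : ℕ) - 1, lt_of_le_of_lt (Nat.sub_le _ _) j.isLt⟩,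
        Or.inr ⟨j, ?_, rfl, by simpa using Nat.succ_pred_eq_of_pos (Nat.pos_of_ne_zero hj)⟩⟩
      exact (down_eq_some_iff ⟨i, j⟩ ⟨i, ⟨(j : ℕ) - 1,
        lt_of_le_of_lt (Nat.sub_le _ _) j.isLt⟩⟩).2 ⟨rfl,
        Nat.succ_pred_eq_of_pos (Nat.pos_of_ne_zero hj)⟩

lemma spider_adj (u v : Option (Σ i : Fin d, Fin (y i))) :
    (spider d y).Adj u v ↔
      (∃ s, v = some s ∧ u = down s) ∨ (∃ s, u = some s ∧ v = down s) := by
  rw [spider, fromRel_adj, spiderRel_iff]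
  constructor
  · rintro ⟨hne, h | h⟩
    · exact Or.inl h
    · rw [spiderRel_iff] at h; exact Or.inr h
  · rintro (⟨s, rfl, rfl⟩ | ⟨s, rfl, rfl⟩)
    · exact ⟨(down_ne_some s), Or.inl ⟨s, rfl, rfl⟩⟩
    · exact ⟨(down_ne_some s).symm, Or.inr ((spiderRel_iff _ _).2 ⟨s, rfl, rfl⟩)⟩

/-- edge associated to a non-core vertex -/
def ed (s : Σ i : Fin d, Fin (y i)) : Sym2 (Option (Σ i : Fin d, Fin (y i))) :=
  s(down s, some s)

lemma ed_injective : Function.Injective (ed (d := d) (y := y)) := by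
  intro s t h
  rw [ed, ed, Sym2.eq_iff] at h
  rcases h with ⟨h1, h2⟩ | ⟨h1, h2⟩
  · exact Option.some_injective _ h2
  · exfalso
    have r1 := rank_down_lt s
    have r2 := rank_down_lt t
    rw [h1] at r1
    rw [← h2] at r2
    omega

lemma spider_edgeSet :
    (spider d y).edgeSet = Set.range (ed (d := d) (y := y)) := by
  ext e
  induction e using Sym2.ind with
  | _ u v =>
    rw [mem_edgeSet, spider_adj]
    constructor
    · rintro (⟨s, rfl, rfl⟩ | ⟨s, rfl, rfl⟩)
      · exact ⟨s, rfl⟩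
      · exact ⟨s, Sym2.eq_swap⟩
    · rintro ⟨s, hs⟩
      rw [ed, Sym2.eq_iff] at hs
      rcases hs with ⟨h1, h2⟩ | ⟨h1, h2⟩
      · exact Or.inl ⟨s, h2.symm, h1.symm⟩
      · exact Or.inr ⟨s, h2.symm, h1.symm⟩

lemma spider_edgeSet_ncard :
    (spider d y).edgeSet.ncard = ∑ i, y i := by
  rw [spider_edgeSet, ← Set.image_univ, Set.ncard_image_of_injective _ ed_injective,
    Set.ncard_univ]
  simp [Nat.card_eq_fintype_card, Fintype.card_sigma]

/-- neighbor set of a pendant vertex -/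
lemma nbr_pendant (s : Σ i : Fin d, Fin (y i)) (hs : (s.2 : ℕ) + 1 = y s.1) :
    (spider d y).neighborSet (some s) = {down s} := by
  ext v
  simp only [mem_neighborSet, spider_adj, Set.mem_singleton_iff]
  constructor
  · rintro (⟨t, rfl, ht⟩ | ⟨t, hst, rfl⟩)
    · exfalso
      obtain ⟨h1, h2⟩ := (down_eq_some_iff _ _).1 ht.symm
      have h3 := t.2.isLt
      have h4 := congrArg y h1
      omega
    · rw [Option.some_inj] at hst; rw [hst]
  · rintro rfl
    exact Or.inr ⟨s, rfl, rfl⟩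

/-- neighbor set of an internal (non-core, non-pendant) vertex -/
lemma nbr_internal (s : Σ i : Fin d, Fin (y i)) (hs : (s.2 : ℕ) + 1 < y s.1) :
    (spider d y).neighborSet (some s) =
      {some ⟨s.1, ⟨(s.2 : ℕ) + 1, hs⟩⟩, down s} := by
  ext v
  simp only [mem_neighborSet, spider_adj, Set.mem_insert_iff, Set.mem_singleton_iff]
  constructor
  · rintro (⟨t, rfl, ht⟩ | ⟨t, hst, rfl⟩)
    · left
      obtain ⟨h1, h2⟩ := (down_eq_some_iff _ _).1 ht.symm
      rw [Option.some_inj, sigma_eq_iff]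
      exact ⟨h1.symm, by simp; omega⟩
    · right
      rw [Option.some_inj] at hst; rw [hst]
  · rintro (rfl | rfl)
    · exact Or.inl ⟨⟨s.1, ⟨(s.2 : ℕ) + 1, hs⟩⟩, rfl,
        ((down_eq_some_iff ⟨s.1, ⟨(s.2 : ℕ) + 1, hs⟩⟩ s).2 ⟨rfl, by simp⟩).symm⟩
    · exact Or.inr ⟨s, rfl, rfl⟩

/-- neighbor set of the core -/
lemma nbr_core (hy : ∀ i, 0 < y i) :
    (spider d y).neighborSet none =
      Set.range (fun i : Fin d => some ⟨i, ⟨0, hy i⟩⟩) := by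
  ext v
  simp only [mem_neighborSet, spider_adj, Set.mem_range]
  constructor
  · rintro (⟨t, rfl, ht⟩ | ⟨t, hst, rfl⟩)
    · refine ⟨t.1, ?_⟩
      symm at ht
      rw [down_eq_none_iff] at ht
      rw [Option.some_inj, sigma_eq_iff]
      exact ⟨rfl, by simp [ht]⟩
    · exact absurd hst (by simp)
  · rintro ⟨i, rfl⟩
    refine Or.inl ⟨_, rfl, ?_⟩
    rw [down]
    simp



/-- leg lengths, ℕ-level -/
def legLen (m k : ℕ) : ℕ → ℕ := fun i =>
  if i = 0 then 2 else if i = 1 then 2 + 2 * m else 2 + 2 * m + k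

/-- junction position in leg 2 -/
def JJ (m k : ℕ) : ℕ := if k % 2 = 1 then k / 2 else 2 + 2 * m + k

/-- the edge label of the edge below vertex `j` of leg `i` -/
def labv (m k : ℕ) : ℕ → ℕ → ℕ := fun i j =>
  if i = 0 then (if j = 0 then 1 else 6 + 4 * m + k)
  else if i = 1 then (if j % 2 = 0 then 2 * m + 2 - j else 4 + 2 * m + k + j)
  else (if (j ≤ JJ m k ∧ j % 2 = 0) ∨ (¬ j ≤ JJ m k ∧ j % 2 = 1)
    then 3 + 2 * m + k - j else 2 * m + 3 + j)

/-- the intended vertex sum at vertex `j` of leg `i` -/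
def colv (m k : ℕ) : ℕ → ℕ → ℕ := fun i j =>
  if i = 0 then (if j = 0 then 7 + 4 * m + k else 6 + 4 * m + k)
  else if i = 1 then (if j = 2 * m + 1 then 5 + 4 * m + k
    else if j % 2 = 0 then 7 + 4 * m + k else 5 + 4 * m + k)
  else if j = 1 + 2 * m + k then 4 + 4 * m + k
  else if k % 2 = 1 ∧ j = k / 2 then 6 + 4 * m + k
  else if (j < JJ m k ∧ j % 2 = 0) ∨ (JJ m k < j ∧ j % 2 = 1) then 7 + 4 * m + k
  else 5 + 4 * m + k

lemma labv_bounds (m k : ℕ) (hk : 2 ≤ k) : ∀ i j, i < 3 → j < legLen m k i →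
    1 ≤ labv m k i j ∧ labv m k i j ≤ 6 + 4 * m + k := by
  intro i j hi hj
  rcases Nat.mod_two_eq_zero_or_one k with hk2 | hk2 <;>
    simp only [labv, JJ, legLen, hk2] at hj ⊢ <;>
    split_ifs at hj ⊢ <;> first
      | contradiction | omega
      | (simp_all only [true_and, and_true, false_and, and_false, or_false, false_or,
          not_true_eq_false, not_false_eq_true, not_not]; omega)
      | simp_all only [true_and, and_true, false_and, and_false, or_false, false_or,
          not_true_eq_false, not_false_eq_true, not_not]

lemma labv_inj (m k : ℕ) (hk : 2 ≤ k) : ∀ i j i' j', i < 3 → j < legLen m k i →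
    i' < 3 → j' < legLen m k i' → labv m k i j = labv m k i' j' →
    i = i' ∧ j = j' := by
  intro i j i' j' hi hj hi' hj' h
  rcases Nat.mod_two_eq_zero_or_one k with hk2 | hk2 <;>
    simp only [labv, JJ, legLen, hk2] at hj hj' h <;>
    split_ifs at hj hj' h <;> first
      | contradiction | omega
      | (simp_all only [true_and, and_true, false_and, and_false, or_false, false_or,
          not_true_eq_false, not_false_eq_true, not_not]; omega)
      | simp_all only [true_and, and_true, false_and, and_false, or_false, false_or,
          not_true_eq_false, not_false_eq_true, not_not]

lemma labv_core (m k : ℕ) (hk : 2 ≤ k) :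
    labv m k 0 0 + labv m k 1 0 + labv m k 2 0 = 6 + 4 * m + k := by
  rcases Nat.mod_two_eq_zero_or_one k with hk2 | hk2 <;>
    simp only [labv, JJ, hk2] <;> split_ifs <;> first
      | contradiction | omega
      | (simp_all only [true_and, and_true, false_and, and_false, or_false, false_or,
          not_true_eq_false, not_false_eq_true, not_not]; omega)
      | simp_all only [true_and, and_true, false_and, and_false, or_false, false_or,
          not_true_eq_false, not_false_eq_true, not_not]

lemma labv_sum_internal (m k : ℕ) (hk : 2 ≤ k) : ∀ i j, i < 3 →
    j + 1 < legLen m k i → labv m k i j + labv m k i (j + 1) = colv m k i j := by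
  intro i j hi hj
  rcases Nat.mod_two_eq_zero_or_one k with hk2 | hk2 <;>
    simp only [labv, colv, JJ, legLen, hk2] at hj ⊢ <;>
    split_ifs at hj ⊢ <;> first
      | contradiction | omega
      | (simp_all only [true_and, and_true, false_and, and_false, or_false, false_or,
          not_true_eq_false, not_false_eq_true, not_not]; omega)
      | simp_all only [true_and, and_true, false_and, and_false, or_false, false_or,
          not_true_eq_false, not_false_eq_true, not_not]

lemma labv_pendant (m k : ℕ) (hk : 2 ≤ k) : ∀ i j, i < 3 → j + 1 = legLen m k i →
    labv m k i j = colv m k i j := by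
  intro i j hi hj
  rcases Nat.mod_two_eq_zero_or_one k with hk2 | hk2 <;>
    simp only [labv, colv, JJ, legLen, hk2] at hj ⊢ <;>
    split_ifs at hj ⊢ <;> first
      | contradiction | omega
      | (simp_all only [true_and, and_true, false_and, and_false, or_false, false_or,
          not_true_eq_false, not_false_eq_true, not_not]; omega)
      | simp_all only [true_and, and_true, false_and, and_false, or_false, false_or,
          not_true_eq_false, not_false_eq_true, not_not]

lemma colv_ne_adj (m k : ℕ) (hk : 2 ≤ k) : ∀ i j, i < 3 → j + 1 < legLen m k i →
    colv m k i j ≠ colv m k i (j + 1) := by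
  intro i j hi hj
  rcases Nat.mod_two_eq_zero_or_one k with hk2 | hk2 <;>
    simp only [colv, JJ, legLen, hk2] at hj ⊢ <;>
    split_ifs at hj ⊢ <;> first
      | contradiction | omega
      | (simp_all only [true_and, and_true, false_and, and_false, or_false, false_or,
          not_true_eq_false, not_false_eq_true, not_not]; omega)
      | simp_all only [true_and, and_true, false_and, and_false, or_false, false_or,
          not_true_eq_false, not_false_eq_true, not_not]

lemma colv_ne_core (m k : ℕ) (hk : 2 ≤ k) : ∀ i, i < 3 →
    colv m k i 0 ≠ 6 + 4 * m + k := by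
  intro i hi
  rcases Nat.mod_two_eq_zero_or_one k with hk2 | hk2 <;>
    simp only [colv, JJ, hk2] <;> split_ifs <;> first
      | contradiction | omega
      | (simp_all only [true_and, and_true, false_and, and_false, or_false, false_or,
          not_true_eq_false, not_false_eq_true, not_not]; omega)
      | simp_all only [true_and, and_true, false_and, and_false, or_false, false_or,
          not_true_eq_false, not_false_eq_true, not_not]

lemma colv_mem (m k : ℕ) (hk : 2 ≤ k) : ∀ i j, i < 3 → j < legLen m k i →
    colv m k i j = 4 + 4 * m + k ∨ colv m k i j = 5 + 4 * m + k ∨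
    colv m k i j = 6 + 4 * m + k ∨ colv m k i j = 7 + 4 * m + k := by
  intro i j hi hj
  rcases Nat.mod_two_eq_zero_or_one k with hk2 | hk2 <;>
    simp only [colv, JJ, legLen, hk2] at hj ⊢ <;>
    split_ifs at hj ⊢ <;> first
      | contradiction | omega
      | (simp_all only [true_and, and_true, false_and, and_false, or_false, false_or,
          not_true_eq_false, not_false_eq_true, not_not]; omega)
      | simp_all only [true_and, and_true, false_and, and_false, or_false, false_or,
          not_true_eq_false, not_false_eq_true, not_not]

lemma colv_attain (m k : ℕ) (hk : 2 ≤ k) :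
    colv m k 0 0 = 7 + 4 * m + k ∧ colv m k 1 (2 * m + 1) = 5 + 4 * m + k ∧
    colv m k 2 (1 + 2 * m + k) = 4 + 4 * m + k := by
  rcases Nat.mod_two_eq_zero_or_one k with hk2 | hk2 <;>
    simp only [colv, JJ, hk2] <;> split_ifs <;> first
      | contradiction | omega
      | (simp_all only [true_and, and_true, false_and, and_false, or_false, false_or,
          not_true_eq_false, not_false_eq_true, not_not]; omega)
      | simp_all only [true_and, and_true, false_and, and_false, or_false, false_or,
          not_true_eq_false, not_false_eq_true, not_not]


lemma legLen_pos (m k : ℕ) (n : ℕ) : 0 < legLen m k n := by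
  unfold legLen; split_ifs <;> omega

lemma legLen0 (m k : ℕ) : legLen m k 0 = 2 := rfl
lemma legLen1 (m k : ℕ) : legLen m k 1 = 2 + 2 * m := rfl
lemma legLen2 (m k : ℕ) : legLen m k 2 = 2 + 2 * m + k := rfl

section VertexSums

variable {d : ℕ} {y : Fin d → ℕ}

lemma vertexSum_pendant' (f : Sym2 (Option (Σ i : Fin d, Fin (y i))) → ℕ)
    (s : Σ i : Fin d, Fin (y i)) (hs : (s.2 : ℕ) + 1 = y s.1) :
    vertexSum (spider d y) f (some s) = f (ed s) := by
  rw [vertexSum, nbr_pendant s hs, finsum_mem_singleton, ed]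
  exact congrArg f Sym2.eq_swap

lemma vertexSum_internal' (f : Sym2 (Option (Σ i : Fin d, Fin (y i))) → ℕ)
    (s : Σ i : Fin d, Fin (y i)) (hs : (s.2 : ℕ) + 1 < y s.1) :
    vertexSum (spider d y) f (some s) = f (ed ⟨s.1, ⟨(s.2 : ℕ) + 1, hs⟩⟩) + f (ed s) := by
  have hne : (some ⟨s.1, ⟨(s.2 : ℕ) + 1, hs⟩⟩ : Option (Σ i : Fin d, Fin (y i))) ≠ down s := by
    intro h
    have h1 := rank_down s
    rw [← h] at h1
    simp only [rank] at h1
    all_goals omega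
  have hd : down (⟨s.1, ⟨(s.2 : ℕ) + 1, hs⟩⟩ : Σ i : Fin d, Fin (y i)) = some s :=
    (down_eq_some_iff _ _).2 ⟨rfl, rfl⟩
  have e1 : f s(some s, some ⟨s.1, ⟨(s.2 : ℕ) + 1, hs⟩⟩) = f (ed ⟨s.1, ⟨(s.2 : ℕ) + 1, hs⟩⟩) := by
    rw [ed, hd]
  have e2 : f s(some s, down s) = f (ed s) := by
    rw [ed]
    exact congrArg f Sym2.eq_swap
  rw [vertexSum, nbr_internal s hs, finsum_mem_pair hne, e1, e2]

end VertexSums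

section Spec

variable (m k : ℕ)

/-- the concrete leg-length vector -/
abbrev yy : Fin 3 → ℕ := ![2, 2 + 2 * m, 2 + 2 * m + k]

lemma yy_val (i : Fin 3) : yy m k i = legLen m k i.val := by
  fin_cases i <;> simp [legLen, yy]

abbrev Vt := Option (Σ i : Fin 3, Fin (yy m k i))

/-- the label function on non-core vertices -/
def lab (s : Σ i : Fin 3, Fin (yy m k i)) : ℕ := labv m k s.1.val s.2.val

open scoped Classical in
/-- half of the labeling -/
noncomputable def phi : Vt m k → Vt m k → ℕ := fun u v =>
  match u with
  | none => 0
  | some t => if v = down t then lab m k t else 0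

/-- the local antimagic labeling -/
noncomputable def fl : Sym2 (Vt m k) → ℕ :=
  Sym2.lift ⟨fun u v => phi m k u v + phi m k v u, fun u v => Nat.add_comm _ _⟩

lemma fl_mk (u v : Vt m k) : fl m k s(u, v) = phi m k u v + phi m k v u := by
  rw [fl, Sym2.lift_mk]

lemma phi_none (v : Vt m k) : phi m k none v = 0 := rfl

lemma phi_some (t : Σ i : Fin 3, Fin (yy m k i)) (v : Vt m k) :
    phi m k (some t) v = if v = down t then lab m k t else 0 := rfl

lemma fl_ed (s : Σ i : Fin 3, Fin (yy m k i)) : fl m k (ed s) = lab m k s := by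
  rw [ed, fl_mk]
  have h2 : phi m k (some s) (down s) = lab m k s := by
    rw [phi_some, if_pos rfl]
  have h1 : phi m k (down s) (some s) = 0 := by
    rcases hds : down s with _ | t
    · rfl
    · rw [phi_some, if_neg]
      intro h
      have r1 := rank_down s
      have r2 := rank_down t
      rw [hds] at r1
      rw [← h] at r2
      simp only [rank] at r1 r2
      all_goals omega
  rw [h1, h2, Nat.zero_add]

/-- the intended vertex sums -/
def colV : Vt m k → ℕ := fun v =>
  match v with
  | none => 6 + 4 * m + k
  | some s => colv m k s.1.val s.2.val

variable (hk : 2 ≤ k)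
include hk

lemma vsum_col (v : Vt m k) :
    vertexSum (spider 3 (yy m k)) (fl m k) v = colV m k v := by
  match v with
  | none =>
    have hy : ∀ i : Fin 3, 0 < yy m k i := by
      intro i; rw [yy_val]; exact legLen_pos m k _
    have hrange : (spider 3 (yy m k)).neighborSet none =
        ↑({some ⟨0, ⟨0, hy 0⟩⟩, some ⟨1, ⟨0, hy 1⟩⟩, some ⟨2, ⟨0, hy 2⟩⟩} :
          Finset (Vt m k)) := by
      rw [nbr_core hy]
      ext v
      simp only [Set.mem_range, Finset.coe_insert, Set.mem_insert_iff,
        Finset.coe_singleton, Set.mem_singleton_iff]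
      constructor
      · rintro ⟨i, rfl⟩
        fin_cases i <;> simp
      · rintro (rfl | rfl | rfl)
        exacts [⟨0, rfl⟩, ⟨1, rfl⟩, ⟨2, rfl⟩]
    have hed : ∀ (i : Fin 3) (h : 0 < yy m k i),
        fl m k s(none, some ⟨i, ⟨0, h⟩⟩) = lab m k ⟨i, ⟨0, h⟩⟩ := by
      intro i h
      have hd : down (⟨i, ⟨0, h⟩⟩ : Σ i : Fin 3, Fin (yy m k i)) = none := by
        rw [down_eq_none_iff]
      rw [← fl_ed, ed, hd]
    have hne01 : (some ⟨0, ⟨0, hy 0⟩⟩ : Vt m k) ≠ some ⟨1, ⟨0, hy 1⟩⟩ := by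
      intro h
      rw [Option.some_inj, sigma_eq_iff] at h
      exact absurd h.1 (by simp)
    have hne02 : (some ⟨0, ⟨0, hy 0⟩⟩ : Vt m k) ≠ some ⟨2, ⟨0, hy 2⟩⟩ := by
      intro h
      rw [Option.some_inj, sigma_eq_iff] at h
      exact absurd h.1 (by simp)
    have hne12 : (some ⟨1, ⟨0, hy 1⟩⟩ : Vt m k) ≠ some ⟨2, ⟨0, hy 2⟩⟩ := by
      intro h
      rw [Option.some_inj, sigma_eq_iff] at h
      exact absurd h.1 (by simp)
    rw [vertexSum, hrange, finsum_mem_coe_finset]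
    rw [Finset.sum_insert (by simp only [Finset.mem_insert, Finset.mem_singleton, not_or]; exact ⟨hne01, hne02⟩),
      Finset.sum_insert (by simp only [Finset.mem_singleton]; exact hne12), Finset.sum_singleton]
    rw [hed 0 (hy 0), hed 1 (hy 1), hed 2 (hy 2)]
    show lab m k ⟨0, ⟨0, hy 0⟩⟩ + (lab m k ⟨1, ⟨0, hy 1⟩⟩ + lab m k ⟨2, ⟨0, hy 2⟩⟩) =
      colV m k none
    have hc := labv_core m k hk
    show labv m k (0 : Fin 3).val 0 + (labv m k (1 : Fin 3).val 0 +
      labv m k (2 : Fin 3).val 0) = 6 + 4 * m + k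
    have e0 : ((0 : Fin 3) : ℕ) = 0 := rfl
    have e1 : ((1 : Fin 3) : ℕ) = 1 := rfl
    have e2 : ((2 : Fin 3) : ℕ) = 2 := rfl
    rw [e0, e1, e2]
    omega
  | some s =>
    have hilt : s.1.val < 3 := s.1.isLt
    have hjlt : s.2.val < legLen m k s.1.val := by
      rw [← yy_val]; exact s.2.isLt
    by_cases hp : (s.2 : ℕ) + 1 = yy m k s.1
    · rw [vertexSum_pendant' _ s hp, fl_ed]
      have hj : s.2.val + 1 = legLen m k s.1.val := by
        rw [← yy_val]; exact hp
      show labv m k s.1.val s.2.val = colv m k s.1.val s.2.val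
      exact labv_pendant m k hk s.1.val s.2.val hilt hj
    · have hlt : (s.2 : ℕ) + 1 < yy m k s.1 := lt_of_le_of_ne s.2.isLt hp
      rw [vertexSum_internal' _ s hlt, fl_ed, fl_ed]
      show labv m k s.1.val ((s.2 : ℕ) + 1) + labv m k s.1.val s.2.val =
        colv m k s.1.val s.2.val
      have := labv_sum_internal m k hk s.1.val s.2.val hilt
        (by rw [← yy_val]; exact hlt)
      omega

end Spec

section Main

variable (m k : ℕ)

lemma ncard_edges : (spider 3 (yy m k)).edgeSet.ncard = 6 + 4 * m + k := by
  rw [spider_edgeSet_ncard, Fin.sum_univ_three]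
  rw [yy_val, yy_val, yy_val]
  simp only [legLen]
  norm_num
  omega

variable (hk : 2 ≤ k)
include hk

lemma lab_injective : Function.Injective (lab m k) := by
  intro s t h
  have hs2 : s.2.val < legLen m k s.1.val := by rw [← yy_val]; exact s.2.isLt
  have ht2 : t.2.val < legLen m k t.1.val := by rw [← yy_val]; exact t.2.isLt
  have := labv_inj m k hk s.1.val s.2.val t.1.val t.2.val s.1.isLt hs2 t.1.isLt ht2 h
  rw [sigma_eq_iff]
  exact ⟨Fin.ext this.1, this.2⟩

lemma range_lab : Set.range (lab m k) = Set.Icc 1 (6 + 4 * m + k) := by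
  have h1 : (Set.range (lab m k)).ncard = 6 + 4 * m + k := by
    rw [← Set.image_univ, Set.ncard_image_of_injective _ (lab_injective m k hk),
      Set.ncard_univ, Nat.card_eq_fintype_card, Fintype.card_sigma]
    simp only [Fintype.card_fin]
    rw [Fin.sum_univ_three, yy_val, yy_val, yy_val]
    simp only [legLen]
    norm_num
    omega
  have h2 : (Set.Icc 1 (6 + 4 * m + k)).ncard = 6 + 4 * m + k := by
    rw [← Nat.card_coe_set_eq, Nat.card_eq_card_toFinset]
    simp [Nat.card_Icc]
  apply Set.eq_of_subset_of_ncard_le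
  · rintro x ⟨s, rfl⟩
    have hs2 : s.2.val < legLen m k s.1.val := by rw [← yy_val]; exact s.2.isLt
    have := labv_bounds m k hk s.1.val s.2.val s.1.isLt hs2
    exact Set.mem_Icc.2 ⟨this.1, this.2⟩
  · rw [h1, h2]
  · exact Set.finite_Icc _ _

lemma fl_image : fl m k '' (spider 3 (yy m k)).edgeSet = Set.Icc 1 (6 + 4 * m + k) := by
  rw [spider_edgeSet, ← Set.range_comp]
  have : fl m k ∘ ed = lab m k := funext fun s => fl_ed m k s
  rw [this, range_lab m k hk]

lemma fl_bijOn :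
    Set.BijOn (fl m k) (spider 3 (yy m k)).edgeSet (Set.Icc 1 (6 + 4 * m + k)) := by
  refine ⟨?_, ?_, ?_⟩
  · intro e he
    rw [← fl_image m k hk]
    exact Set.mem_image_of_mem _ he
  · intro e1 he1 e2 he2 h
    rw [spider_edgeSet] at he1 he2
    obtain ⟨s, rfl⟩ := he1
    obtain ⟨t, rfl⟩ := he2
    rw [fl_ed, fl_ed] at h
    exact congrArg ed (lab_injective m k hk h)
  · rw [Set.SurjOn, fl_image m k hk]

lemma colV_down_ne (s : Σ i : Fin 3, Fin (yy m k i)) :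
    colV m k (down s) ≠ colV m k (some s) := by
  rcases hd : down s with _ | t
  · have h0 : (s.2 : ℕ) = 0 := (down_eq_none_iff s).1 hd
    show (6 + 4 * m + k) ≠ colv m k s.1.val s.2.val
    rw [h0]
    exact (colv_ne_core m k hk s.1.val s.1.isLt).symm
  · obtain ⟨h1, h2⟩ := (down_eq_some_iff s t).1 hd
    show colv m k t.1.val t.2.val ≠ colv m k s.1.val s.2.val
    have hieq : t.1.val = s.1.val := congrArg Fin.val h1
    have hsv : s.2.val < legLen m k s.1.val := by rw [← yy_val]; exact s.2.isLt
    have hleq : legLen m k t.1.val = legLen m k s.1.val := by rw [hieq]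
    have hlt : t.2.val + 1 < legLen m k t.1.val := by omega
    have h3 := colv_ne_adj m k hk t.1.val t.2.val t.1.isLt hlt
    rw [h2] at h3
    rw [hieq] at h3 ⊢
    exact h3

lemma fl_antimagic : IsLocalAntimagic (spider 3 (yy m k)) (fl m k) := by
  constructor
  · rw [ncard_edges m k]
    exact fl_bijOn m k hk
  · intro x y hadj
    rw [vsum_col m k hk, vsum_col m k hk]
    rw [spider_adj] at hadj
    rcases hadj with ⟨s, rfl, rfl⟩ | ⟨s, rfl, rfl⟩
    · exact colV_down_ne m k hk s
    · exact (colV_down_ne m k hk s).symm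

lemma colorCount_fl : colorCount (spider 3 (yy m k)) (fl m k) = 4 := by
  have hfun : vertexSum (spider 3 (yy m k)) (fl m k) = colV m k :=
    funext (vsum_col m k hk)
  rw [colorCount, hfun]
  have hb0 : (0 : ℕ) < yy m k 0 := by rw [yy_val]; exact legLen_pos m k _
  have hb1 : 2 * m + 1 < yy m k 1 := by
    rw [yy_val]
    show 2 * m + 1 < legLen m k 1
    rw [legLen1]
    omega
  have hb2 : 1 + 2 * m + k < yy m k 2 := by
    rw [yy_val]
    show 1 + 2 * m + k < legLen m k 2
    rw [legLen2]
    omega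
  have hr : Set.range (colV m k) =
      {4 + 4 * m + k, 5 + 4 * m + k, 6 + 4 * m + k, 7 + 4 * m + k} := by
    ext x
    simp only [Set.mem_range, Set.mem_insert_iff, Set.mem_singleton_iff]
    constructor
    · rintro ⟨v, rfl⟩
      match v with
      | none => right; right; left; rfl
      | some s =>
        have hs2 : s.2.val < legLen m k s.1.val := by rw [← yy_val]; exact s.2.isLt
        exact colv_mem m k hk s.1.val s.2.val s.1.isLt hs2
    · rintro (rfl | rfl | rfl | rfl)
      · refine ⟨some ⟨2, ⟨1 + 2 * m + k, hb2⟩⟩, ?_⟩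
        show colv m k (2 : Fin 3).val (1 + 2 * m + k) = _
        have : ((2 : Fin 3) : ℕ) = 2 := rfl
        rw [this]
        exact (colv_attain m k hk).2.2
      · refine ⟨some ⟨1, ⟨2 * m + 1, hb1⟩⟩, ?_⟩
        show colv m k (1 : Fin 3).val (2 * m + 1) = _
        have : ((1 : Fin 3) : ℕ) = 1 := rfl
        rw [this]
        exact (colv_attain m k hk).2.1
      · exact ⟨none, rfl⟩
      · refine ⟨some ⟨0, ⟨0, hb0⟩⟩, ?_⟩
        show colv m k (0 : Fin 3).val 0 = _
        have : ((0 : Fin 3) : ℕ) = 0 := rfl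
        rw [this]
        exact (colv_attain m k hk).1
  rw [hr]
  rw [Set.ncard_insert_of_notMem (by simp),
    Set.ncard_insert_of_notMem (by simp), Set.ncard_pair (by omega)]

omit hk

lemma mem_edgeSet_ed (s : Σ i : Fin 3, Fin (yy m k i)) :
    ed s ∈ (spider 3 (yy m k)).edgeSet := by
  rw [spider_edgeSet]
  exact ⟨s, rfl⟩

include hk

lemma lower_bound (f : Sym2 (Vt m k) → ℕ)
    (hf : IsLocalAntimagic (spider 3 (yy m k)) f) :
    4 ≤ colorCount (spider 3 (yy m k)) f := by
  obtain ⟨hbij, hadj⟩ := hf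
  rw [ncard_edges m k] at hbij
  have hb1A : (1 : ℕ) < yy m k 0 := by
    rw [yy_val]; show 1 < legLen m k 0; rw [legLen0]; omega
  have hb1B : 2 * m + 1 < yy m k 1 := by
    rw [yy_val]; show 2 * m + 1 < legLen m k 1; rw [legLen1]; omega
  have hb1C : 1 + 2 * m + k < yy m k 2 := by
    rw [yy_val]; show 1 + 2 * m + k < legLen m k 2; rw [legLen2]; omega
  set sA : Σ i : Fin 3, Fin (yy m k i) := ⟨0, ⟨1, hb1A⟩⟩ with hsA
  set sB : Σ i : Fin 3, Fin (yy m k i) := ⟨1, ⟨2 * m + 1, hb1B⟩⟩ with hsB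
  set sC : Σ i : Fin 3, Fin (yy m k i) := ⟨2, ⟨1 + 2 * m + k, hb1C⟩⟩ with hsC
  have hpA : (sA.2 : ℕ) + 1 = yy m k sA.1 := by
    show 1 + 1 = yy m k 0; rw [yy_val]; show _ = legLen m k 0; rw [legLen0]
  have hpB : (sB.2 : ℕ) + 1 = yy m k sB.1 := by
    show 2 * m + 1 + 1 = yy m k 1; rw [yy_val]; show _ = legLen m k 1; rw [legLen1]; omega
  have hpC : (sC.2 : ℕ) + 1 = yy m k sC.1 := by
    show 1 + 2 * m + k + 1 = yy m k 2; rw [yy_val]; show _ = legLen m k 2; rw [legLen2]; omega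
  have hvA := vertexSum_pendant' f sA hpA
  have hvB := vertexSum_pendant' f sB hpB
  have hvC := vertexSum_pendant' f sC hpC
  have hmemA := hbij.1 (mem_edgeSet_ed m k sA)
  have hmemB := hbij.1 (mem_edgeSet_ed m k sB)
  have hmemC := hbij.1 (mem_edgeSet_ed m k sC)
  rw [Set.mem_Icc] at hmemA hmemB hmemC
  have hdist : ∀ (s t : Σ i : Fin 3, Fin (yy m k i)), (s.1 : ℕ) ≠ (t.1 : ℕ) →
      f (ed s) ≠ f (ed t) := by
    intro s t hst h
    have heq := ed_injective (hbij.2.1 (mem_edgeSet_ed m k s) (mem_edgeSet_ed m k t) h)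
    rw [sigma_eq_iff] at heq
    exact hst (congrArg Fin.val heq.1)
  have hAB : f (ed sA) ≠ f (ed sB) := hdist sA sB (by rw [hsA, hsB]; norm_num)
  have hAC : f (ed sA) ≠ f (ed sC) := hdist sA sC (by rw [hsA, hsC]; norm_num)
  have hBC : f (ed sB) ≠ f (ed sC) := hdist sB sC (by rw [hsB, hsC]; norm_num)
  -- a vertex with sum > q
  have hq1 : (6 + 4 * m + k) ∈ Set.Icc 1 (6 + 4 * m + k) := by
    rw [Set.mem_Icc]; omega
  obtain ⟨e, heE, hfe⟩ := hbij.2.2 hq1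
  rw [spider_edgeSet] at heE
  obtain ⟨s, rfl⟩ := heE
  have hbig : ∃ v, 7 + 4 * m + k ≤ vertexSum (spider 3 (yy m k)) f v := by
    by_cases hc : (s.2 : ℕ) + 1 < yy m k s.1
    · refine ⟨some s, ?_⟩
      rw [vertexSum_internal' f s hc, hfe]
      have h1 := hbij.1 (mem_edgeSet_ed m k ⟨s.1, ⟨(s.2 : ℕ) + 1, hc⟩⟩)
      rw [Set.mem_Icc] at h1
      omega
    · have hpend : (s.2 : ℕ) + 1 = yy m k s.1 := by
        have := s.2.isLt; omega
      have hyge2 : 2 ≤ yy m k s.1 := by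
        rw [yy_val]; unfold legLen; split_ifs <;> omega
      have hs2 : 1 ≤ (s.2 : ℕ) := by omega
      have hblt : (s.2 : ℕ) - 1 < yy m k s.1 := by
        have := s.2.isLt; omega
      set t : Σ i : Fin 3, Fin (yy m k i) := ⟨s.1, ⟨(s.2 : ℕ) - 1, hblt⟩⟩ with hst
      have hct : (t.2 : ℕ) + 1 < yy m k t.1 := by
        show (s.2 : ℕ) - 1 + 1 < yy m k s.1
        have := s.2.isLt; omega
      refine ⟨some t, ?_⟩
      rw [vertexSum_internal' f t hct]
      have hchild : (⟨t.1, ⟨(t.2 : ℕ) + 1, hct⟩⟩ : Σ i : Fin 3, Fin (yy m k i)) = s := by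
        rw [sigma_eq_iff]
        refine ⟨rfl, ?_⟩
        show (s.2 : ℕ) - 1 + 1 = (s.2 : ℕ)
        omega
      rw [hchild, hfe]
      have h2 := hbij.1 (mem_edgeSet_ed m k t)
      rw [Set.mem_Icc] at h2
      omega
  obtain ⟨v, hv⟩ := hbig
  have hsub : ({f (ed sA), f (ed sB), f (ed sC),
      vertexSum (spider 3 (yy m k)) f v} : Set ℕ) ⊆
      Set.range (vertexSum (spider 3 (yy m k)) f) := by
    rintro x (rfl | rfl | rfl | rfl)
    · exact ⟨some sA, hvA⟩
    · exact ⟨some sB, hvB⟩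
    · exact ⟨some sC, hvC⟩
    · exact ⟨v, rfl⟩
  have hcard : ({f (ed sA), f (ed sB), f (ed sC),
      vertexSum (spider 3 (yy m k)) f v} : Set ℕ).ncard = 4 := by
    rw [Set.ncard_insert_of_notMem (by simp; refine ⟨hAB, hAC, ?_⟩; omega),
      Set.ncard_insert_of_notMem (by simp; refine ⟨hBC, ?_⟩; omega),
      Set.ncard_pair (by omega)]
  calc (4 : ℕ) = _ := hcard.symm
    _ ≤ _ := Set.ncard_le_ncard hsub (Set.finite_range _)

end Main

end Stmt14

theorem stmt14 (m k : ℕ) (hk : 2 ≤ k) :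
    chiLA (spider 3 ![2, 2 + 2 * m, 2 + 2 * m + k]) = 4 := by
  show chiLA (spider 3 (Stmt14.yy m k)) = 4
  have h4 : (4 : ℕ) ∈ {n | ∃ f, IsLocalAntimagic (spider 3 (Stmt14.yy m k)) f ∧
      colorCount (spider 3 (Stmt14.yy m k)) f = n} :=
    ⟨Stmt14.fl m k, Stmt14.fl_antimagic m k hk, Stmt14.colorCount_fl m k hk⟩
  refine le_antisymm (Nat.sInf_le h4) (le_csInf ⟨4, h4⟩ ?_)
  rintro n ⟨f, hf, rfl⟩
  exact Stmt14.lower_bound m k hk f hf
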